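/- The function 𝒱 is lower semicontinuous on Δ_S, and the kernel F_𝒱 is lower semicontinuous and bounded from below on Δ_S × Δ_S. -/

import Mathlib

open MeasureTheory Filter Topology
open scoped ENNReal NNReal

/-- `⊤`-aware positive part of an extended real, as a value in `ℝ≥0∞`. -/
noncomputable def EReal.posPart' (x : EReal) : ℝ≥0∞ :=
  if x = ⊤ then ⊤ else ENNReal.ofReal x.toReal

/-- Integral of an `EReal`-valued function: positive part minus negative part. -/
noncomputable def eIntegral {α : Type*} [MeasurableSpace α] (μ : Measure α) (f : α → EReal) :
    EReal :=
  ((∫⁻ x, (f x).posPart' ∂μ : ℝ≥0∞) : EReal) - ((∫⁻ x, (-(f x)).posPart' ∂μ : ℝ≥0∞) : EReal)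

/-- `log (1/r)` as an extended real, equal to `+∞` at `r = 0`. -/
noncomputable def negLog (r : ℝ) : EReal :=
  if r = 0 then ⊤ else ((- Real.log r : ℝ) : EReal)

/-- The weighted logarithmic kernel `F_W(x,y) = (β/2) log(1/|x-y|) + W(x)/2 + W(y)/2`. -/
noncomputable def kern {α : Type*} [PseudoMetricSpace α] (β : ℝ) (W : α → EReal) (x y : α) :
    EReal :=
  ((β / 2 : ℝ) : EReal) * negLog (dist x y) + ((2⁻¹ : ℝ) : EReal) * W x
    + ((2⁻¹ : ℝ) : EReal) * W y

/-- The weighted logarithmic energy `I_W(μ) = ∬ F_W(x,y) dμ(x) dμ(y)`. -/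
noncomputable def energy {α : Type*} [MeasurableSpace α] [PseudoMetricSpace α] (β : ℝ)
    (W : α → EReal) (μ : Measure α) : EReal :=
  eIntegral (μ.prod μ) (fun p => kern β W p.1 p.2)

/-- The set of (Borel) probability measures carried by the closed set `Δ`,
i.e. `M_1(Δ)` viewed inside the probability measures on the ambient space. -/
def M1 {α : Type*} [MeasurableSpace α] [TopologicalSpace α]
    (Δ : Set α) : Set (ProbabilityMeasure α) :=
  {μ | (μ : Measure α) Δᶜ = 0}

/-- The filter `|x| → ∞, x ∈ Δ`. -/
noncomputable def atComplexInftyWithin (Δ : Set ℂ) : Filter ℂ :=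
  (Filter.comap (fun x : ℂ => ‖x‖) Filter.atTop) ⊓ Filter.principal Δ

/-- The weak growth assumption : `liminf_{|x| → ∞, x ∈ Δ} (V(x) - β' log |x|) > -∞`
for some `β' > 1` with `β' ≥ β`. -/
def WeakGrowth (β : ℝ) (Δ : Set ℂ) (V : ℂ → ℝ) : Prop :=
  ∃ β' : ℝ, 1 < β' ∧ β ≤ β' ∧
    (⊥ : EReal) <
      Filter.liminf (fun x : ℂ => ((V x - β' * Real.log (‖x‖) : ℝ) : EReal))
        (atComplexInftyWithin Δ)

/-- The inverse stereographic projection from `ℂ` onto the Riemann sphere `S ⊂ ℝ³`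
(the sphere of radius `1/2` centered at `(0,0,1/2)`). -/
noncomputable def Tst (x : ℂ) : EuclideanSpace ℝ (Fin 3) :=
  (EuclideanSpace.equiv (Fin 3) ℝ).symm
    ![x.re / (1 + ‖x‖ ^ 2), x.im / (1 + ‖x‖ ^ 2),
      ‖x‖ ^ 2 / (1 + ‖x‖ ^ 2)]

/-- The north pole `∞ = (0,0,1)` of the Riemann sphere. -/
noncomputable def sInfty : EuclideanSpace ℝ (Fin 3) :=
  (EuclideanSpace.equiv (Fin 3) ℝ).symm ![0, 0, 1]

lemma continuous_Tst : Continuous Tst := by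
  refine ((EuclideanSpace.equiv (Fin 3) ℝ).symm.continuous).comp ?_
  have h : Continuous fun x : ℂ => 1 + ‖x‖ ^ 2 :=
    continuous_const.add (continuous_norm.pow 2)
  have hne : ∀ x : ℂ, 1 + ‖x‖ ^ 2 ≠ 0 := fun x => by positivity
  refine continuous_pi fun i => ?_
  fin_cases i
  · exact (Complex.continuous_re.div h hne).congr fun a => by simp
  · exact (Complex.continuous_im.div h hne).congr fun a => by simp
  · exact ((continuous_norm.pow 2).div h hne).congr fun a => by simp

/-- Push-forward of a probability measure by the inverse stereographic projection `T`. -/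
noncomputable def pushT (μ : ProbabilityMeasure ℂ) :
    ProbabilityMeasure (EuclideanSpace ℝ (Fin 3)) :=
  μ.map continuous_Tst.measurable.aemeasurable

/-- `Δ_S`, the closure in the sphere of the image of `Δ` by `T`. -/
noncomputable def deltaS (Δ : Set ℂ) : Set (EuclideanSpace ℝ (Fin 3)) :=
  closure (Tst '' Δ)

/-- The weak growth assumption for an extended-real-valued potential:
`liminf_{|x| → ∞, x ∈ Δ} (V(x) - β' log |x|) > -∞` for some `β' > 1` with `β' ≥ β`. -/
def WeakGrowthE (β : ℝ) (Δ : Set ℂ) (V : ℂ → EReal) : Prop :=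
  ∃ β' : ℝ, 1 < β' ∧ β ≤ β' ∧
    (⊥ : EReal) <
      Filter.liminf
        (fun x : ℂ => V x - ((β' * Real.log (‖x‖) : ℝ) : EReal))
        (atComplexInftyWithin Δ)

/-- The defining property of the potential `𝒱` on the sphere built from `V`:
`𝒱(T x) = V(x) - (β/2) log (1+|x|²)` on `Δ` and
`𝒱(∞) = liminf_{|x|→∞, x ∈ Δ} (V(x) - (β/2) log (1+|x|²))`. -/
def IsSpherePotential (β : ℝ) (Δ : Set ℂ) (V : ℂ → EReal)
    (𝒱 : EuclideanSpace ℝ (Fin 3) → EReal) : Prop :=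
  (∀ x ∈ Δ, 𝒱 (Tst x) =
      V x - ((β / 2 * Real.log (1 + ‖x‖ ^ 2) : ℝ) : EReal)) ∧
    𝒱 sInfty =
      Filter.liminf
        (fun x : ℂ => V x - ((β / 2 * Real.log (1 + ‖x‖ ^ 2) : ℝ) : EReal))
        (atComplexInftyWithin Δ)


/-! ### Auxiliary lemmas -/

section Aux
open Real

lemma EReal.coe_mul_lt_mul_of_pos {b t : ℝ} (hb : 0 < b) {y : EReal} (h : (t : EReal) < y) :
    ((b * t : ℝ) : EReal) < (b : EReal) * y := by
  induction y with
  | bot => exact absurd h not_lt_bot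
  | coe r =>
      rw [← EReal.coe_mul, EReal.coe_lt_coe_iff]
      exact mul_lt_mul_of_pos_left (EReal.coe_lt_coe_iff.1 h) hb
  | top => rw [EReal.coe_mul_top_of_pos hb]; exact EReal.coe_lt_top _

lemma EReal.coe_mul_le_mul_of_pos {b t : ℝ} (hb : 0 < b) {y : EReal} (h : (t : EReal) ≤ y) :
    ((b * t : ℝ) : EReal) ≤ (b : EReal) * y := by
  rcases eq_or_lt_of_le h with h' | h'
  · rw [← h', ← EReal.coe_mul]
  · exact (EReal.coe_mul_lt_mul_of_pos hb h').le

lemma EReal.coe_sub_le_sub_coe {t K : ℝ} {y : EReal} (h : (t : EReal) ≤ y) :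
    ((t - K : ℝ) : EReal) ≤ y - (K : EReal) := by
  induction y with
  | bot => simp at h
  | coe r =>
      rw [← EReal.coe_sub, EReal.coe_le_coe_iff]
      exact sub_le_sub_right (EReal.coe_le_coe_iff.1 h) K
  | top => rw [EReal.top_sub_coe]; exact le_top

lemma EReal.bot_lt_sub_coe {a : EReal} (ha : a ≠ ⊥) (r : ℝ) : ⊥ < a - (r : EReal) := by
  induction a with
  | bot => exact absurd rfl ha
  | coe s => rw [← EReal.coe_sub]; exact EReal.bot_lt_coe _
  | top => rw [EReal.top_sub_coe]; exact bot_lt_top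

lemma EReal.sub_coe_le_sub_coe_of_le {a : EReal} {s t : ℝ} (h : s ≤ t) :
    a - (t : EReal) ≤ a - (s : EReal) := by
  rw [sub_eq_add_neg, sub_eq_add_neg]
  exact add_le_add le_rfl (EReal.neg_le_neg_iff.2 (EReal.coe_le_coe_iff.2 h))

lemma EReal.sub_coe_sub_coe (a : EReal) (s t : ℝ) :
    a - (s : EReal) - (t : EReal) = a - ((s + t : ℝ) : EReal) := by
  induction a with
  | bot => rw [EReal.bot_sub, EReal.bot_sub, EReal.bot_sub]
  | coe r => rw [← EReal.coe_sub, ← EReal.coe_sub, ← EReal.coe_sub]; norm_cast; ring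
  | top => rw [EReal.top_sub_coe, EReal.top_sub_coe, EReal.top_sub_coe]

lemma lscWithinAt_comp {α ι : Type*} [TopologicalSpace α] [TopologicalSpace ι]
    {f : α → EReal} {g : ι → α} {s : Set α} {t : Set ι} {x : ι}
    (hf : LowerSemicontinuousWithinAt f s (g x)) (hg : ContinuousWithinAt g t x)
    (hmaps : Set.MapsTo g t s) :
    LowerSemicontinuousWithinAt (fun y => f (g y)) t x :=
  fun c hc => (hg.tendsto_nhdsWithin hmaps).eventually (hf c hc)

lemma EReal.div_lt_of_lt_mul {b d : ℝ} (hb : 0 < b) {y : EReal}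
    (h : (d : EReal) < (b : EReal) * y) : ((d / b : ℝ) : EReal) < y := by
  induction y with
  | bot => rw [EReal.coe_mul_bot_of_pos hb] at h; exact absurd h not_lt_bot
  | coe r =>
      rw [← EReal.coe_mul, EReal.coe_lt_coe_iff] at h
      rw [EReal.coe_lt_coe_iff]
      exact (div_lt_iff₀ hb).2 (by linarith [mul_comm b r])
  | top => exact EReal.coe_lt_top _

lemma lscWithinAt_const_mul {α : Type*} [TopologicalSpace α] {b : ℝ} (hb : 0 < b)
    {W : α → EReal} {s : Set α} {x : α} (hW : LowerSemicontinuousWithinAt W s x) :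
    LowerSemicontinuousWithinAt (fun y => (b : EReal) * W y) s x := by
  intro c hc
  simp only at hc
  obtain ⟨d, hcd, hd⟩ : ∃ d : ℝ, c ≤ (d : EReal) ∧ (d : EReal) < (b : EReal) * W x := by
    induction c with
    | bot =>
        have hne : (b : EReal) * W x ≠ ⊥ := fun h => by
          rw [h] at hc; exact absurd hc not_lt_bot
        obtain ⟨d, h1, h2⟩ := EReal.exists_between_coe_real (bot_lt_iff_ne_bot.2 hne)
        exact ⟨d, h1.le, h2⟩
    | coe c₀ => exact ⟨c₀, le_refl _, hc⟩
    | top => exact absurd hc not_top_lt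
  have ht : ((d / b : ℝ) : EReal) < W x := EReal.div_lt_of_lt_mul hb hd
  filter_upwards [hW _ ht] with y hy
  refine lt_of_le_of_lt hcd ?_
  have := EReal.coe_mul_lt_mul_of_pos hb hy
  rwa [show b * (d / b) = d by field_simp] at this

lemma lsc_negLog : LowerSemicontinuous negLog := by
  intro r
  rcases eq_or_ne r 0 with hr | hr
  · subst hr
    intro c hc
    rw [negLog, if_pos rfl] at hc
    obtain ⟨M, hcM, _⟩ := EReal.exists_between_coe_real hc
    have hev : ∀ᶠ y in 𝓝 (0 : ℝ), |y - 0| < rexp (-M) := eventually_abs_sub_lt 0 (exp_pos _)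
    filter_upwards [hev] with y hy
    rcases eq_or_ne y 0 with hy0 | hy0
    · rw [hy0, negLog, if_pos rfl]; exact lt_of_lt_of_le hcM le_top
    · rw [negLog, if_neg hy0]
      refine lt_trans hcM ?_
      rw [EReal.coe_lt_coe_iff]
      have habs : |y| < rexp (-M) := by simpa using hy
      have h0 : 0 < |y| := abs_pos.2 hy0
      have : Real.log |y| < -M := by
        have := Real.log_lt_log h0 habs
        rwa [Real.log_exp] at this
      rw [Real.log_abs] at this
      linarith
  · have hev : negLog =ᶠ[𝓝 r] fun y => ((- Real.log y : ℝ) : EReal) := by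
      filter_upwards [isOpen_compl_singleton.mem_nhds (by simpa using hr)] with y hy
      rw [negLog, if_neg (by simpa using hy)]
    have hcont : ContinuousAt (fun y : ℝ => ((- Real.log y : ℝ) : EReal)) r :=
      continuous_coe_real_ereal.continuousAt.comp (Real.continuousAt_log hr).neg
    exact (hcont.congr hev.symm).lowerSemicontinuousAt

lemma Tst_apply (x : ℂ) :
    Tst x 0 = x.re / (1 + ‖x‖ ^ 2) ∧
      Tst x 1 = x.im / (1 + ‖x‖ ^ 2) ∧
      Tst x 2 = ‖x‖ ^ 2 / (1 + ‖x‖ ^ 2) :=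
  ⟨rfl, rfl, rfl⟩

lemma sInfty_apply : sInfty 0 = 0 ∧ sInfty 1 = 0 ∧ sInfty 2 = 1 := ⟨rfl, rfl, rfl⟩

lemma abs_sq_eq (x : ℂ) : ‖x‖ ^ 2 = x.re ^ 2 + x.im ^ 2 := by
  rw [Complex.sq_norm, Complex.normSq_apply]; ring

lemma dist_Tst_sInfty (x : ℂ) :
    dist (Tst x) sInfty = 1 / Real.sqrt (1 + ‖x‖ ^ 2) := by
  have hs : (0 : ℝ) < 1 + ‖x‖ ^ 2 := by positivity
  rw [EuclideanSpace.dist_eq, Fin.sum_univ_three, (Tst_apply x).1, (Tst_apply x).2.1,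
    (Tst_apply x).2.2, sInfty_apply.1, sInfty_apply.2.1, sInfty_apply.2.2]
  simp only [Real.dist_eq, sq_abs]
  have key : (x.re / (1 + ‖x‖ ^ 2) - 0) ^ 2 + (x.im / (1 + ‖x‖ ^ 2) - 0) ^ 2
      + (‖x‖ ^ 2 / (1 + ‖x‖ ^ 2) - 1) ^ 2
      = 1 / (1 + ‖x‖ ^ 2) := by
    have habs := abs_sq_eq x
    field_simp
    nlinarith [habs]
  rw [key, one_div, one_div, Real.sqrt_inv]

lemma norm_Tst_le (x : ℂ) : ‖Tst x‖ ≤ 1 := by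
  have hs : (0 : ℝ) < 1 + ‖x‖ ^ 2 := by positivity
  rw [EuclideanSpace.norm_eq, Fin.sum_univ_three, (Tst_apply x).1, (Tst_apply x).2.1,
    (Tst_apply x).2.2]
  simp only [Real.norm_eq_abs, sq_abs]
  refine Real.sqrt_le_one.mpr ?_
  have habs := abs_sq_eq x
  rw [div_pow, div_pow, div_pow, ← add_div, ← add_div, div_le_one (by positivity)]
  nlinarith [habs, sq_nonneg (‖x‖ ^ 2)]

lemma deltaS_subset_closedBall (Δ : Set ℂ) :
    deltaS Δ ⊆ Metric.closedBall (0 : EuclideanSpace ℝ (Fin 3)) 1 := by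
  refine closure_minimal ?_ Metric.isClosed_closedBall
  rintro p ⟨x, -, rfl⟩
  simpa [Metric.mem_closedBall, dist_zero_right] using norm_Tst_le x

lemma dist_Tst_sInfty_lt_iff {x : ℂ} {R : ℝ} (hR : 0 ≤ R) :
    dist (Tst x) sInfty < 1 / Real.sqrt (1 + R ^ 2) ↔ R < ‖x‖ := by
  have h1 : (0 : ℝ) < Real.sqrt (1 + R ^ 2) := Real.sqrt_pos.2 (by positivity)
  have h2 : (0 : ℝ) < Real.sqrt (1 + ‖x‖ ^ 2) := Real.sqrt_pos.2 (by positivity)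
  rw [dist_Tst_sInfty, div_lt_div_iff₀ h2 h1, one_mul, one_mul]
  rw [Real.sqrt_lt_sqrt_iff (by positivity)]
  constructor
  · intro h; nlinarith [norm_nonneg x]
  · intro h; nlinarith

lemma Tst_ne_sInfty (x : ℂ) : Tst x ≠ sInfty := by
  intro h
  have := dist_Tst_sInfty x
  rw [h, dist_self] at this
  have h2 : (0 : ℝ) < Real.sqrt (1 + ‖x‖ ^ 2) := Real.sqrt_pos.2 (by positivity)
  rw [eq_comm, div_eq_zero_iff] at this
  rcases this with h' | h'
  · norm_num at h'
  · exact absurd h' (ne_of_gt h2)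

/-- The inverse of the stereographic projection, defined off the north pole. -/
noncomputable def invT (p : EuclideanSpace ℝ (Fin 3)) : ℂ :=
  (p 0 / (1 - p 2) : ℝ) + (p 1 / (1 - p 2) : ℝ) * Complex.I

lemma Tst_two_ne_one (x : ℂ) : Tst x 2 ≠ 1 := by
  have hs : (0 : ℝ) < 1 + ‖x‖ ^ 2 := by positivity
  rw [(Tst_apply x).2.2]
  intro h
  rw [div_eq_one_iff_eq (ne_of_gt hs)] at h
  linarith

lemma invT_Tst (x : ℂ) : invT (Tst x) = x := by
  have hs : (0 : ℝ) < 1 + ‖x‖ ^ 2 := by positivity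
  have h2 : 1 - Tst x 2 = 1 / (1 + ‖x‖ ^ 2) := by
    rw [(Tst_apply x).2.2]; field_simp; ring
  rw [invT, h2, (Tst_apply x).1, (Tst_apply x).2.1]
  have e1 : x.re / (1 + ‖x‖ ^ 2) / (1 / (1 + ‖x‖ ^ 2)) = x.re := by
    field_simp
  have e2 : x.im / (1 + ‖x‖ ^ 2) / (1 / (1 + ‖x‖ ^ 2)) = x.im := by
    field_simp
  rw [e1, e2, Complex.re_add_im]

lemma continuousAt_invT {p : EuclideanSpace ℝ (Fin 3)} (hp : p 2 ≠ 1) :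
    ContinuousAt invT p := by
  have hc2 : Continuous fun q : EuclideanSpace ℝ (Fin 3) => q 2 :=
    (EuclideanSpace.proj (2 : Fin 3) : EuclideanSpace ℝ (Fin 3) →L[ℝ] ℝ).continuous
  have hc0 : Continuous fun q : EuclideanSpace ℝ (Fin 3) => q 0 :=
    (EuclideanSpace.proj (0 : Fin 3) : EuclideanSpace ℝ (Fin 3) →L[ℝ] ℝ).continuous
  have hc1 : Continuous fun q : EuclideanSpace ℝ (Fin 3) => q 1 :=
    (EuclideanSpace.proj (1 : Fin 3) : EuclideanSpace ℝ (Fin 3) →L[ℝ] ℝ).continuous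
  have hne : (1 : ℝ) - p 2 ≠ 0 := sub_ne_zero.2 (Ne.symm hp)
  have d0 : ContinuousAt (fun q : EuclideanSpace ℝ (Fin 3) => q 0 / (1 - q 2)) p :=
    hc0.continuousAt.div ((continuous_const.sub hc2).continuousAt) hne
  have d1 : ContinuousAt (fun q : EuclideanSpace ℝ (Fin 3) => q 1 / (1 - q 2)) p :=
    hc1.continuousAt.div ((continuous_const.sub hc2).continuousAt) hne
  exact ((Complex.continuous_ofReal.continuousAt.comp d0).add
    ((Complex.continuous_ofReal.continuousAt.comp d1).mul continuousAt_const))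

lemma deltaS_subset (Δ : Set ℂ) (hΔclosed : IsClosed Δ) :
    deltaS Δ ⊆ Tst '' Δ ∪ {sInfty} := by
  intro p hp
  rcases eq_or_ne p sInfty with hps | hps
  · exact Or.inr (by simp [hps])
  left
  have hδ : 0 < dist p sInfty := dist_pos.2 hps
  set δ := dist p sInfty with hδdef
  obtain ⟨R, hR0, hRδ⟩ : ∃ R : ℝ, 0 ≤ R ∧ 1 / Real.sqrt (1 + R ^ 2) < δ / 2 := by
    refine ⟨max 0 (2 / δ), le_max_left _ _, ?_⟩
    set R := max 0 (2 / δ)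
    have hRd : 2 / δ ≤ R := le_max_right _ _
    have hsq : R < Real.sqrt (1 + R ^ 2) := by
      have : R = Real.sqrt (R ^ 2) := (Real.sqrt_sq (le_max_left _ _)).symm
      nth_rewrite 1 [this]
      exact Real.sqrt_lt_sqrt (by positivity) (by linarith)
    have h2δ : 0 < 2 / δ := by positivity
    have hs : 2 / δ < Real.sqrt (1 + R ^ 2) := lt_of_le_of_lt hRd hsq
    calc 1 / Real.sqrt (1 + R ^ 2) < 1 / (2 / δ) := by
          apply one_div_lt_one_div_of_lt h2δ hs
      _ = δ / 2 := by field_simp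
  have hmem : p ∈ closure (Tst '' Δ ∩ Metric.ball p (δ / 2)) := by
    have : p ∈ Metric.ball p (δ / 2) ∩ closure (Tst '' Δ) :=
      ⟨Metric.mem_ball_self (by linarith), hp⟩
    have h' := Metric.isOpen_ball.inter_closure this
    rwa [Set.inter_comm (Tst '' Δ)]
  have hsub : Tst '' Δ ∩ Metric.ball p (δ / 2) ⊆ Tst '' (Δ ∩ Metric.closedBall 0 R) := by
    rintro q ⟨⟨x, hx, rfl⟩, hq⟩
    refine ⟨x, ⟨hx, ?_⟩, rfl⟩
    rw [Metric.mem_closedBall, Complex.dist_eq, sub_zero]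
    by_contra habs
    push_neg at habs
    have hdx : dist (Tst x) sInfty < 1 / Real.sqrt (1 + R ^ 2) :=
      (dist_Tst_sInfty_lt_iff hR0).2 habs
    have hpx : dist p (Tst x) < δ / 2 := by rwa [dist_comm, ← Metric.mem_ball]
    have htri : δ ≤ dist p (Tst x) + dist (Tst x) sInfty := dist_triangle _ _ _
    linarith
  have hcomp : IsCompact (Tst '' (Δ ∩ Metric.closedBall 0 R)) :=
    ((isCompact_closedBall (0 : ℂ) R).inter_left hΔclosed).image continuous_Tst
  have hmem' : p ∈ Tst '' (Δ ∩ Metric.closedBall 0 R) := by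
    have h2 := (closure_mono hsub) hmem
    rwa [hcomp.isClosed.closure_eq] at h2
  exact Set.image_mono Set.inter_subset_left hmem'

lemma exists_coe_le_of_lsc {α : Type*} [TopologicalSpace α] {K : Set α} (hK : IsCompact K)
    {f : α → EReal} (hf : LowerSemicontinuousOn f K) (hbot : ∀ p ∈ K, f p ≠ ⊥) :
    ∃ m : ℝ, ∀ p ∈ K, (m : EReal) ≤ f p := by
  have key : ∀ p ∈ K, ∃ (m : ℝ) (U : Set α), IsOpen U ∧ p ∈ U ∧
      ∀ y ∈ U ∩ K, (m : EReal) ≤ f y := by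
    intro p hp
    obtain ⟨m, -, hm⟩ := EReal.exists_between_coe_real (Ne.bot_lt (hbot p hp))
    have hev := hf p hp m hm
    rw [eventually_iff, mem_nhdsWithin] at hev
    obtain ⟨U, hUopen, hpU, hUsub⟩ := hev
    exact ⟨m, U, hUopen, hpU, fun y hy => (hUsub hy).le⟩
  choose! m U hUopen hpU hle using key
  obtain ⟨t, ht⟩ := hK.elim_nhds_subcover' (fun p _ => U p)
    (fun p hp => (hUopen p hp).mem_nhds (hpU p hp))
  rcases t.eq_empty_or_nonempty with rfl | htne
  · exact ⟨0, fun p hp => absurd (ht hp) (by simp)⟩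
  · refine ⟨t.inf' htne (fun x => m x), fun p hp => ?_⟩
    obtain ⟨x, hxt, hpx⟩ : ∃ x ∈ t, p ∈ U x := by simpa using ht hp
    refine le_trans ?_ (hle x x.2 p ⟨hpx, hp⟩)
    exact_mod_cast Finset.inf'_le _ hxt

end Aux

theorem spherePotential_lsc_and_kernel_bddBelow (β : ℝ) (hβ : 0 < β)
    (Δ : Set ℂ) (hΔclosed : IsClosed Δ) (hΔunbounded : ¬ Bornology.IsBounded Δ)
    (V : ℂ → EReal) (hVbot : ∀ x ∈ Δ, V x ≠ ⊥) (hVlsc : LowerSemicontinuousOn V Δ)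
    (hgrowth : WeakGrowthE β Δ V)
    (𝒱 : EuclideanSpace ℝ (Fin 3) → EReal) (h𝒱 : IsSpherePotential β Δ V 𝒱) :
    LowerSemicontinuousOn 𝒱 (deltaS Δ) ∧
      LowerSemicontinuousOn (fun p : EuclideanSpace ℝ (Fin 3) × EuclideanSpace ℝ (Fin 3) =>
        kern β 𝒱 p.1 p.2) ((deltaS Δ) ×ˢ (deltaS Δ)) ∧
      ∃ m : ℝ, ∀ z ∈ deltaS Δ, ∀ w ∈ deltaS Δ, (m : EReal) ≤ kern β 𝒱 z w := by
  obtain ⟨h𝒱T, h𝒱inf⟩ := h𝒱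
  set g : ℂ → EReal :=
    fun x => V x + ((-(β / 2 * Real.log (1 + ‖x‖ ^ 2)) : ℝ) : EReal) with hgdef
  have hgeq : ∀ x : ℂ,
      g x = V x - ((β / 2 * Real.log (1 + ‖x‖ ^ 2) : ℝ) : EReal) := fun x => by
    show V x + ((-(β / 2 * Real.log (1 + ‖x‖ ^ 2)) : ℝ) : EReal) = _
    rw [EReal.coe_neg, ← sub_eq_add_neg]
  have hrcont : Continuous
      fun x : ℂ => ((-(β / 2 * Real.log (1 + ‖x‖ ^ 2)) : ℝ) : EReal) := by
    refine continuous_coe_real_ereal.comp ?_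
    refine Continuous.neg ?_
    refine continuous_const.mul ?_
    exact (continuous_const.add (continuous_norm.pow 2)).log fun x => (by positivity : (0:ℝ) < 1 + ‖x‖ ^ 2).ne'
  have hg : LowerSemicontinuousOn g Δ := by
    intro x hx
    refine LowerSemicontinuousWithinAt.add' (hVlsc x hx) hrcont.continuousAt.continuousWithinAt.lowerSemicontinuousWithinAt ?_
    exact EReal.continuousAt_add (Or.inr (EReal.coe_ne_bot _)) (Or.inr (EReal.coe_ne_top _))
  -- lower semicontinuity of 𝒱 on Δ_S
  have hVsc : LowerSemicontinuousOn 𝒱 (deltaS Δ) := by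
    intro p hp
    rcases deltaS_subset Δ hΔclosed hp with ⟨x₀, hx₀, rfl⟩ | hps
    · intro c hc
      rw [h𝒱T x₀ hx₀, ← hgeq x₀] at hc
      have hgev := hg x₀ hx₀ c hc
      rw [eventually_iff, mem_nhdsWithin] at hgev
      obtain ⟨O, hOopen, hx₀O, hOsub⟩ := hgev
      have hev1 : ∀ᶠ q in 𝓝[deltaS Δ] (Tst x₀), q ∈ Tst '' Δ := by
        have h1 : ∀ᶠ q in 𝓝[deltaS Δ] (Tst x₀), q ∈ deltaS Δ := eventually_mem_nhdsWithin
        have h2 : ∀ᶠ q in 𝓝[deltaS Δ] (Tst x₀), q ≠ sInfty :=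
          (isOpen_compl_singleton.eventually_mem (Tst_ne_sInfty x₀)).filter_mono
            nhdsWithin_le_nhds
        filter_upwards [h1, h2] with q hq1 hq2
        rcases deltaS_subset Δ hΔclosed hq1 with h | h
        · exact h
        · exact absurd h hq2
      have hev2 : ∀ᶠ q in 𝓝[deltaS Δ] (Tst x₀), invT q ∈ O := by
        have h5 : Filter.Tendsto invT (𝓝 (Tst x₀)) (𝓝 x₀) := by
          have h6 := continuousAt_invT (Tst_two_ne_one x₀)
          rwa [ContinuousAt, invT_Tst] at h6
        exact (h5.eventually (hOopen.eventually_mem hx₀O)).filter_mono nhdsWithin_le_nhds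
      filter_upwards [hev1, hev2] with q hq1 hq2
      obtain ⟨x, hxΔ, rfl⟩ := hq1
      rw [invT_Tst] at hq2
      have hcg : c < g x := hOsub ⟨hq2, hxΔ⟩
      rw [h𝒱T x hxΔ, ← hgeq x]
      exact hcg
    · rw [Set.mem_singleton_iff] at hps
      subst hps
      intro c hc
      rw [h𝒱inf] at hc
      have hev := Filter.eventually_lt_of_lt_liminf hc
      simp only [atComplexInftyWithin] at hev
      rw [Filter.eventually_inf_principal, Filter.eventually_comap] at hev
      obtain ⟨R, hR⟩ := Filter.eventually_atTop.1 hev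
      set R' := max R 0 with hR'def
      have hR'0 : (0 : ℝ) ≤ R' := le_max_right _ _
      have hpos : (0 : ℝ) < 1 / Real.sqrt (1 + R' ^ 2) := by positivity
      have hball : ∀ᶠ q in 𝓝[deltaS Δ] sInfty,
          q ∈ Metric.ball sInfty (1 / Real.sqrt (1 + R' ^ 2)) :=
        (Metric.isOpen_ball.eventually_mem (Metric.mem_ball_self hpos)).filter_mono
          nhdsWithin_le_nhds
      have hmemS : ∀ᶠ q in 𝓝[deltaS Δ] sInfty, q ∈ deltaS Δ := eventually_mem_nhdsWithin
      filter_upwards [hball, hmemS] with q hq1 hq2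
      rcases deltaS_subset Δ hΔclosed hq2 with ⟨x, hxΔ, rfl⟩ | hq3
      · have hlt : R' < ‖x‖ :=
          (dist_Tst_sInfty_lt_iff hR'0).1 (by rwa [Metric.mem_ball] at hq1)
        have := hR (‖x‖) (le_trans (le_max_left R 0) hlt.le) x rfl hxΔ
        rwa [h𝒱T x hxΔ]
      · rw [Set.mem_singleton_iff] at hq3
        rw [hq3, h𝒱inf]
        exact hc
  -- 𝒱 is never ⊥ on Δ_S
  have hbot : ∀ p ∈ deltaS Δ, 𝒱 p ≠ ⊥ := by
    intro p hp
    rcases deltaS_subset Δ hΔclosed hp with ⟨x, hx, rfl⟩ | hp'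
    · rw [h𝒱T x hx]
      exact (EReal.bot_lt_sub_coe (hVbot x hx) _).ne'
    · rw [Set.mem_singleton_iff] at hp'
      subst hp'
      rw [h𝒱inf]
      obtain ⟨β', hβ'1, hββ', hliminf⟩ := hgrowth
      obtain ⟨b, -, hb⟩ := EReal.exists_between_coe_real hliminf
      have hev1 := Filter.eventually_lt_of_lt_liminf hb
      have hev2 : ∀ᶠ x in atComplexInftyWithin Δ, 1 ≤ ‖x‖ := by
        have h1 : ((fun x : ℂ => ‖x‖) ⁻¹' Set.Ici 1) ∈
            Filter.comap (fun x : ℂ => ‖x‖) Filter.atTop :=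
          Filter.preimage_mem_comap (Filter.Ici_mem_atTop 1)
        exact Filter.mem_inf_of_left h1
      have hev3 : ∀ᶠ x in atComplexInftyWithin Δ,
          ((b - β / 2 * Real.log 2 : ℝ) : EReal) ≤
            V x - ((β / 2 * Real.log (1 + ‖x‖ ^ 2) : ℝ) : EReal) := by
        filter_upwards [hev1, hev2] with x h1 h2
        have hlogx : 0 ≤ Real.log (‖x‖) := Real.log_nonneg h2
        have hlog : β / 2 * Real.log (1 + ‖x‖ ^ 2) ≤
            β' * Real.log (‖x‖) + β / 2 * Real.log 2 := by
          have hle2 : (1 : ℝ) + ‖x‖ ^ 2 ≤ 2 * ‖x‖ ^ 2 := by nlinarith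
          have h2' : Real.log (1 + ‖x‖ ^ 2) ≤
              Real.log 2 + 2 * Real.log (‖x‖) := by
            calc Real.log (1 + ‖x‖ ^ 2) ≤ Real.log (2 * ‖x‖ ^ 2) :=
                  Real.log_le_log (by positivity) hle2
              _ = Real.log 2 + 2 * Real.log (‖x‖) := by
                  rw [Real.log_mul (by norm_num) (by positivity), Real.log_pow]
                  push_cast; ring
          have h3 : β / 2 * Real.log (1 + ‖x‖ ^ 2) ≤
              β / 2 * (Real.log 2 + 2 * Real.log (‖x‖)) :=
            mul_le_mul_of_nonneg_left h2' (by linarith)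
          have h4 : β * Real.log (‖x‖) ≤ β' * Real.log (‖x‖) :=
            mul_le_mul_of_nonneg_right hββ' hlogx
          nlinarith
        have step1 : V x - ((β' * Real.log (‖x‖) + β / 2 * Real.log 2 : ℝ) : EReal) ≤
            V x - ((β / 2 * Real.log (1 + ‖x‖ ^ 2) : ℝ) : EReal) :=
          EReal.sub_coe_le_sub_coe_of_le hlog
        have step2 : ((b - β / 2 * Real.log 2 : ℝ) : EReal) ≤
            V x - ((β' * Real.log (‖x‖) + β / 2 * Real.log 2 : ℝ) : EReal) := by
          have h5 := EReal.coe_sub_le_sub_coe (K := β / 2 * Real.log 2) h1.le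
          rwa [EReal.sub_coe_sub_coe] at h5
        exact le_trans step2 step1
      have h6 := Filter.le_liminf_of_le (by isBoundedDefault) hev3
      exact (lt_of_lt_of_le (EReal.bot_lt_coe _) h6).ne'
  -- compactness of Δ_S and lower bound on 𝒱
  have hKcomp : IsCompact (deltaS Δ) :=
    (isCompact_closedBall (0 : EuclideanSpace ℝ (Fin 3)) 1).of_isClosed_subset
      isClosed_closure (deltaS_subset_closedBall Δ)
  obtain ⟨m, hm⟩ := exists_coe_le_of_lsc hKcomp hVsc hbot
  have hβ2 : (0 : ℝ) < β / 2 := by linarith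
  have hhalf : (0 : ℝ) < 2⁻¹ := by norm_num
  -- lower bounds for the three terms of the kernel
  have hterm1 : ∀ z ∈ deltaS Δ, ∀ w ∈ deltaS Δ,
      ((β / 2 * (-Real.log 2) : ℝ) : EReal) ≤ ((β / 2 : ℝ) : EReal) * negLog (dist z w) := by
    intro z hz w hw
    have hzb : ‖z‖ ≤ 1 := by
      simpa [Metric.mem_closedBall, dist_zero_right] using deltaS_subset_closedBall Δ hz
    have hwb : ‖w‖ ≤ 1 := by
      simpa [Metric.mem_closedBall, dist_zero_right] using deltaS_subset_closedBall Δ hw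
    have hdist : dist z w ≤ 2 := le_trans (dist_le_norm_add_norm z w) (by linarith)
    refine EReal.coe_mul_le_mul_of_pos hβ2 ?_
    rw [negLog]
    split_ifs with h
    · exact le_top
    · rw [EReal.coe_le_coe_iff]
      have hd0 : 0 < dist z w := lt_of_le_of_ne dist_nonneg (Ne.symm h)
      have := Real.log_le_log hd0 hdist
      linarith
  have hterm2 : ∀ z ∈ deltaS Δ,
      ((2⁻¹ * m : ℝ) : EReal) ≤ ((2⁻¹ : ℝ) : EReal) * 𝒱 z := fun z hz =>
    EReal.coe_mul_le_mul_of_pos hhalf (hm z hz)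
  refine ⟨hVsc, ?_, ⟨β / 2 * (-Real.log 2) + 2⁻¹ * m + 2⁻¹ * m, ?_⟩⟩
  · -- lower semicontinuity of the kernel
    rintro p ⟨hp1, hp2⟩
    have l1 : LowerSemicontinuousWithinAt
        (fun q : EuclideanSpace ℝ (Fin 3) × EuclideanSpace ℝ (Fin 3) =>
          ((β / 2 : ℝ) : EReal) * negLog (dist q.1 q.2))
        (deltaS Δ ×ˢ deltaS Δ) p :=
      lscWithinAt_const_mul hβ2
        (LowerSemicontinuousAt.lowerSemicontinuousWithinAt _ ((lsc_negLog.comp continuous_dist) p))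
    have l2 : LowerSemicontinuousWithinAt
        (fun q : EuclideanSpace ℝ (Fin 3) × EuclideanSpace ℝ (Fin 3) =>
          ((2⁻¹ : ℝ) : EReal) * 𝒱 q.1) (deltaS Δ ×ˢ deltaS Δ) p :=
      lscWithinAt_const_mul hhalf
        (lscWithinAt_comp (hVsc p.1 hp1) continuous_fst.continuousWithinAt fun q hq => hq.1)
    have l3 : LowerSemicontinuousWithinAt
        (fun q : EuclideanSpace ℝ (Fin 3) × EuclideanSpace ℝ (Fin 3) =>
          ((2⁻¹ : ℝ) : EReal) * 𝒱 q.2) (deltaS Δ ×ˢ deltaS Δ) p :=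
      lscWithinAt_const_mul hhalf
        (lscWithinAt_comp (hVsc p.2 hp2) continuous_snd.continuousWithinAt fun q hq => hq.2)
    have b1 : ((β / 2 : ℝ) : EReal) * negLog (dist p.1 p.2) ≠ ⊥ :=
      (lt_of_lt_of_le (EReal.bot_lt_coe _) (hterm1 p.1 hp1 p.2 hp2)).ne'
    have b2 : ((2⁻¹ : ℝ) : EReal) * 𝒱 p.1 ≠ ⊥ :=
      (lt_of_lt_of_le (EReal.bot_lt_coe _) (hterm2 p.1 hp1)).ne'
    have b3 : ((2⁻¹ : ℝ) : EReal) * 𝒱 p.2 ≠ ⊥ :=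
      (lt_of_lt_of_le (EReal.bot_lt_coe _) (hterm2 p.2 hp2)).ne'
    have hsum12 := l1.add' l2 (EReal.continuousAt_add (Or.inr b2) (Or.inl b1))
    have b12 : ((β / 2 : ℝ) : EReal) * negLog (dist p.1 p.2)
        + ((2⁻¹ : ℝ) : EReal) * 𝒱 p.1 ≠ ⊥ := by
      rw [Ne, EReal.add_eq_bot_iff]
      push_neg
      exact ⟨b1, b2⟩
    have hfull := hsum12.add' l3 (EReal.continuousAt_add (Or.inr b3) (Or.inl b12))
    exact hfull
  · -- lower bound of the kernel
    intro z hz w hw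
    have t1 := hterm1 z hz w hw
    have t2 := hterm2 z hz
    have t3 := hterm2 w hw
    calc ((β / 2 * (-Real.log 2) + 2⁻¹ * m + 2⁻¹ * m : ℝ) : EReal)
        = ((β / 2 * (-Real.log 2) : ℝ) : EReal) + ((2⁻¹ * m : ℝ) : EReal)
          + ((2⁻¹ * m : ℝ) : EReal) := by
          rw [EReal.coe_add, EReal.coe_add]
      _ ≤ kern β 𝒱 z w := add_le_add (add_le_add t1 t2) t3
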